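/- For every positive real L and ρ₁,ρ₂ ∈ [0,1), the Hellinger contrast d_H(ρ₁,ρ₂|L) = 1 − [4√((1-ρ₁²)(1-ρ₂²))/(4−(ρ₁+ρ₂)²)]^L lies in [0,1), is symmetric in (ρ₁,ρ₂), and vanishes if and only if ρ₁ = ρ₂. -/

import Mathlib

noncomputable def dH (L r1 r2 : ℝ) : ℝ :=
  1 - (4 * Real.sqrt ((1 - r1 ^ 2) * (1 - r2 ^ 2)) / (4 - (r1 + r2) ^ 2)) ^ L

theorem stmt_3 (L r1 r2 : ℝ) (hL : 0 < L)
    (h1 : r1 ∈ Set.Ico (0 : ℝ) 1) (h2 : r2 ∈ Set.Ico (0 : ℝ) 1) :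
    dH L r1 r2 ∈ Set.Ico (0 : ℝ) 1 ∧ dH L r1 r2 = dH L r2 r1 ∧
      (dH L r1 r2 = 0 ↔ r1 = r2) := by
  obtain ⟨h1l, h1r⟩ := h1
  obtain ⟨h2l, h2r⟩ := h2
  set x : ℝ := (1 - r1 ^ 2) * (1 - r2 ^ 2) with hxdef
  have hx : 0 < x := by exact mul_pos (by nlinarith) (by nlinarith)
  have hD : 0 < 4 - (r1 + r2) ^ 2 := by nlinarith
  have hs : 0 < Real.sqrt x := Real.sqrt_pos.mpr hx
  set a : ℝ := 4 * Real.sqrt x / (4 - (r1 + r2) ^ 2) with hadef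
  have ha : 0 < a := by positivity
  have hxle : x ≤ ((4 - (r1 + r2) ^ 2) / 4) ^ 2 := by
    rw [hxdef]
    nlinarith [mul_nonneg (sq_nonneg (r1-r2)) (mul_nonneg h1l h2l), mul_nonneg (sq_nonneg (r1-r2)) (sq_nonneg (r1+r2)), sq_nonneg (r1-r2)]
  have hale : a ≤ 1 := by
    have h4 : (0:ℝ) < (4 - (r1 + r2) ^ 2) / 4 := by linarith
    have := Real.sqrt_le_sqrt hxle
    rw [Real.sqrt_sq h4.le] at this
    rw [hadef, div_le_one hD]
    linarith
  have hdh : dH L r1 r2 = 1 - a ^ L := rfl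
  have hmem : dH L r1 r2 ∈ Set.Ico (0:ℝ) 1 := by
    constructor
    · rw [hdh]
      have : a ^ L ≤ 1 := Real.rpow_le_one ha.le hale hL.le
      linarith
    · rw [hdh]
      have : 0 < a ^ L := Real.rpow_pos_of_pos ha L
      linarith
  refine ⟨hmem, ?_, ?_⟩
  · unfold dH
    ring_nf
  · constructor
    · intro h
      rw [hdh] at h
      have haL : a ^ L = 1 := by linarith
      have ha1 : a = 1 := by
        by_contra hne
        have hlt : a < 1 := lt_of_le_of_ne hale hne
        have := Real.rpow_lt_one ha.le hlt hL
        linarith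
      have h4 : 4 * Real.sqrt x = 4 - (r1 + r2) ^ 2 := by
        field_simp [hadef] at ha1
        rw [hadef, div_eq_one_iff_eq hD.ne'] at ha1
        linarith
      have hxeq : 16 * x = (4 - (r1 + r2) ^ 2) ^ 2 := by
        have : (4 * Real.sqrt x) ^ 2 = (4 - (r1 + r2) ^ 2) ^ 2 := by rw [h4]
        rw [mul_pow, Real.sq_sqrt hx.le] at this
        linarith
      have h0 : (r1 - r2) ^ 2 = 0 := by nlinarith [sq_nonneg (r1 + r2), mul_nonneg h1l h2l]
      have := pow_eq_zero_iff (n := 2) (by norm_num) |>.mp h0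
      linarith
    · intro h
      subst h
      have hsx : Real.sqrt x = 1 - r1 ^ 2 := by
        rw [hxdef, ← sq]
        exact Real.sqrt_sq (by nlinarith)
      have ha1 : a = 1 := by
        rw [hadef, hsx]
        have : 4 - (r1 + r1) ^ 2 = 4 * (1 - r1 ^ 2) := by ring
        rw [this]
        exact div_self (by nlinarith)
      rw [hdh, ha1, Real.one_rpow]
      ring
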